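/- Let M be a finite matroid on ground set E with rank function r_M, let Z ⊆ E, and let c be an element not in E. Define R on subsets of E ∪ {c} by R(X) = r_M(X) for X ⊆ E, and, for X ⊆ E, R(X ∪ {c}) = r_M(X) if μ_M(Z,X) = r_M(X), and R(X ∪ {c}) = r_M(X) + 1 otherwise. Then R is the rank function of a matroid on E ∪ {c}; that is, there exists a matroid M' on E ∪ {c} whose rank function is R (this is the operation of placing c freely into the guts of the separation (Z, E∖Z)). -/

import Mathlib

/-- A finite matroid on ground set `E`, given by its rank function, which satisfies
`r ∅ = 0`, the unit-increase property, and submodularity (on subsets of `E`). -/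
structure FinMatroid (α : Type*) [DecidableEq α] where
  E : Finset α
  r : Finset α → ℕ
  r_empty : r ∅ = 0
  r_le_insert : ∀ X ⊆ E, ∀ e ∈ E, r X ≤ r (insert e X)
  r_insert_le : ∀ X ⊆ E, ∀ e ∈ E, r (insert e X) ≤ r X + 1
  r_submod : ∀ X ⊆ E, ∀ Y ⊆ E, r (X ∪ Y) + r (X ∩ Y) ≤ r X + r Y

namespace FinMatroid

variable {α : Type*} [DecidableEq α]

/-- A set is independent if it is a subset of the ground set whose rank equals its
cardinality. -/
def Indep (M : FinMatroid α) (X : Finset α) : Prop :=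
  X ⊆ M.E ∧ M.r X = X.card

/-- A set is dependent if it is a subset of the ground set that is not independent. -/
def Dep (M : FinMatroid α) (X : Finset α) : Prop :=
  X ⊆ M.E ∧ M.r X ≠ X.card

/-- A circuit is a minimal dependent set: a dependent set all of whose proper subsets
are independent. -/
def Circuit (M : FinMatroid α) (C : Finset α) : Prop :=
  M.Dep C ∧ ∀ C' ⊂ C, M.Indep C'

/-- The connectivity function `λ_M(X) = r(X) + r(E \ X) - r(E)`. -/
def lambda (M : FinMatroid α) (X : Finset α) : ℤ :=
  (M.r X : ℤ) + (M.r (M.E \ X) : ℤ) - (M.r M.E : ℤ)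

/-- `μ_M(X, A) = r(X ∪ A) + r((E \ X) ∪ A) - r(E)`. -/
def mu (M : FinMatroid α) (X A : Finset α) : ℤ :=
  (M.r (X ∪ A) : ℤ) + (M.r ((M.E \ X) ∪ A) : ℤ) - (M.r M.E : ℤ)

/-- The closure `cl_M(X) = {e ∈ E : r(X ∪ {e}) = r(X)}`. -/
def cl (M : FinMatroid α) (X : Finset α) : Finset α :=
  M.E.filter fun e => M.r (insert e X) = M.r X

/-- The width of the path-decomposition (ordering) given by the list `L`:
the maximum of `λ_M({e₁, …, e_i})` over the nonempty prefixes of `L`. -/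
def pdWidth (M : FinMatroid α) (L : List α) : ℤ :=
  ((List.range L.length).map fun i => M.lambda (L.take (i + 1)).toFinset).foldr max 0

/-- The path-width of a matroid: the minimum width over all orderings of the ground
set. -/
noncomputable def pathwidth (M : FinMatroid α) : ℤ :=
  sInf (M.pdWidth '' { L : List α | L.Nodup ∧ L.toFinset = M.E })

end FinMatroid

namespace FreeGuts
variable {α : Type*} [DecidableEq α]

lemma anti_of_insert (M : FinMatroid α) (f : Finset α → ℤ)
    (h : ∀ X ⊆ M.E, ∀ e ∈ M.E, f (insert e X) ≤ f X) :
    ∀ S ⊆ M.E, ∀ X ⊆ M.E, f (X ∪ S) ≤ f X := by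
  intro S
  induction S using Finset.induction with
  | empty => intro _ X hX; simp
  | insert _ _ ha ih =>
    intro hS X hX
    rename_i a S
    have haE : a ∈ M.E := hS (Finset.mem_insert_self a S)
    have hSE : S ⊆ M.E := fun x hx => hS (Finset.mem_insert_of_mem hx)
    have he : X ∪ insert a S = insert a (X ∪ S) := Finset.union_insert a X S
    rw [he]
    calc f (insert a (X ∪ S)) ≤ f (X ∪ S) := h _ (Finset.union_subset hX hSE) a haE
    _ ≤ f X := ih hSE X hX

lemma r_mono (M : FinMatroid α) {X Y : Finset α} (hXY : X ⊆ Y) (hY : Y ⊆ M.E) :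
    M.r X ≤ M.r Y := by
  have h := anti_of_insert M (fun X => -(M.r X : ℤ))
    (by intro X hX e he; simp only [neg_le_neg_iff, Nat.cast_le]; exact M.r_le_insert X hX e he)
    Y hY X (hXY.trans hY)
  simp only [Finset.union_eq_right.mpr hXY, neg_le_neg_iff, Nat.cast_le] at h
  exact h

lemma r_cl (M : FinMatroid α) {X A : Finset α} {e : α} (hX : X ⊆ M.E) (hA : A ⊆ M.E)
    (he : e ∈ M.E) (hr : M.r (insert e X) = M.r X) :
    M.r (A ∪ insert e X) = M.r (A ∪ X) := by
  have hiX : insert e X ⊆ M.E := Finset.insert_subset he hX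
  have hAX : A ∪ X ⊆ M.E := Finset.union_subset hA hX
  have hsub := M.r_submod (insert e X) hiX (A ∪ X) hAX
  have hu : insert e X ∪ (A ∪ X) = A ∪ insert e X := by
    ext x; simp only [Finset.mem_union, Finset.mem_insert]; tauto
  rw [hu] at hsub
  have h1 : M.r X ≤ M.r (insert e X ∩ (A ∪ X)) := by
    refine r_mono M ?_ ((Finset.inter_subset_left).trans hiX)
    intro x hx; simp only [Finset.mem_inter, Finset.mem_insert, Finset.mem_union]; tauto
  have h2 : M.r (A ∪ X) ≤ M.r (A ∪ insert e X) := by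
    refine r_mono M ?_ (Finset.union_subset hA hiX)
    intro x hx; simp only [Finset.mem_union, Finset.mem_insert] at hx ⊢; tauto
  omega

lemma mu_ge (M : FinMatroid α) {Z X : Finset α} (hZ : Z ⊆ M.E) (hX : X ⊆ M.E) :
    (M.r X : ℤ) ≤ M.mu Z X := by
  have hsub := M.r_submod (Z ∪ X) (Finset.union_subset hZ hX)
    ((M.E \ Z) ∪ X) (Finset.union_subset (Finset.sdiff_subset) hX)
  have hu : (Z ∪ X) ∪ ((M.E \ Z) ∪ X) = M.E := by
    ext x
    have h1 : x ∈ Z → x ∈ M.E := fun h => hZ h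
    have h2 : x ∈ X → x ∈ M.E := fun h => hX h
    simp only [Finset.mem_union, Finset.mem_sdiff]; tauto
  have hi : (Z ∪ X) ∩ ((M.E \ Z) ∪ X) = X := by
    ext x; simp only [Finset.mem_inter, Finset.mem_union, Finset.mem_sdiff]; tauto
  rw [hu, hi] at hsub
  unfold FinMatroid.mu
  omega

lemma mu_insert_ge (M : FinMatroid α) {Z X : Finset α} (hZ : Z ⊆ M.E) (hX : X ⊆ M.E)
    {e : α} (he : e ∈ M.E) : M.mu Z X ≤ M.mu Z (insert e X) := by
  have h1 : M.r (Z ∪ X) ≤ M.r (Z ∪ insert e X) := by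
    rw [Finset.union_insert]; exact M.r_le_insert _ (Finset.union_subset hZ hX) e he
  have h2 : M.r ((M.E \ Z) ∪ X) ≤ M.r ((M.E \ Z) ∪ insert e X) := by
    rw [Finset.union_insert]
    exact M.r_le_insert _ (Finset.union_subset Finset.sdiff_subset hX) e he
  unfold FinMatroid.mu; omega

lemma mu_insert_le (M : FinMatroid α) {Z X : Finset α} (hZ : Z ⊆ M.E) (hX : X ⊆ M.E)
    {e : α} (he : e ∈ M.E) : M.mu Z (insert e X) ≤ M.mu Z X + 1 := by
  by_cases heZ : e ∈ Z
  · have h1 : Z ∪ insert e X = Z ∪ X := by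
      rw [Finset.union_insert, Finset.insert_eq_self.mpr (Finset.mem_union_left X heZ)]
    have h2 : M.r ((M.E \ Z) ∪ insert e X) ≤ M.r ((M.E \ Z) ∪ X) + 1 := by
      rw [Finset.union_insert]
      exact M.r_insert_le _ (Finset.union_subset Finset.sdiff_subset hX) e he
    unfold FinMatroid.mu; rw [h1]; omega
  · have heZ' : e ∈ M.E \ Z := Finset.mem_sdiff.mpr ⟨he, heZ⟩
    have h1 : (M.E \ Z) ∪ insert e X = (M.E \ Z) ∪ X := by
      rw [Finset.union_insert, Finset.insert_eq_self.mpr (Finset.mem_union_left X heZ')]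
    have h2 : M.r (Z ∪ insert e X) ≤ M.r (Z ∪ X) + 1 := by
      rw [Finset.union_insert]
      exact M.r_insert_le _ (Finset.union_subset hZ hX) e he
    unfold FinMatroid.mu; rw [h1]; omega

lemma mu_insert_eq (M : FinMatroid α) {Z X : Finset α} (hZ : Z ⊆ M.E) (hX : X ⊆ M.E)
    {e : α} (he : e ∈ M.E) (hr : M.r (insert e X) = M.r X) :
    M.mu Z (insert e X) = M.mu Z X := by
  unfold FinMatroid.mu
  rw [r_cl M hX hZ he hr, r_cl M hX Finset.sdiff_subset he hr]

lemma g_anti (M : FinMatroid α) {Z : Finset α} (hZ : Z ⊆ M.E) {X Y : Finset α}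
    (hXY : X ⊆ Y) (hY : Y ⊆ M.E) :
    M.mu Z Y - (M.r Y : ℤ) ≤ M.mu Z X - (M.r X : ℤ) := by
  have h := anti_of_insert M (fun X => M.mu Z X - (M.r X : ℤ)) ?_ Y hY X (hXY.trans hY)
  · simpa only [Finset.union_eq_right.mpr hXY] using h
  · intro X hX e he
    by_cases hr : M.r (insert e X) = M.r X
    · simp only [mu_insert_eq M hZ hX he hr, hr, le_refl]
    · have h1 := M.r_le_insert X hX e he
      have h2 := M.r_insert_le X hX e he
      have h3 := mu_insert_le M hZ hX he
      omega

lemma mu_submod (M : FinMatroid α) {Z X Y : Finset α} (hZ : Z ⊆ M.E) (hX : X ⊆ M.E)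
    (hY : Y ⊆ M.E) : M.mu Z (X ∪ Y) + M.mu Z (X ∩ Y) ≤ M.mu Z X + M.mu Z Y := by
  have h1 := M.r_submod (Z ∪ X) (Finset.union_subset hZ hX) (Z ∪ Y) (Finset.union_subset hZ hY)
  have h2 := M.r_submod ((M.E \ Z) ∪ X) (Finset.union_subset Finset.sdiff_subset hX)
    ((M.E \ Z) ∪ Y) (Finset.union_subset Finset.sdiff_subset hY)
  have e1 : (Z ∪ X) ∪ (Z ∪ Y) = Z ∪ (X ∪ Y) := by
    ext x; simp only [Finset.mem_union]; tauto
  have e2 : (Z ∪ X) ∩ (Z ∪ Y) = Z ∪ (X ∩ Y) := by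
    ext x; simp only [Finset.mem_union, Finset.mem_inter]; tauto
  have e3 : ((M.E \ Z) ∪ X) ∪ ((M.E \ Z) ∪ Y) = (M.E \ Z) ∪ (X ∪ Y) := by
    ext x; simp only [Finset.mem_union]; tauto
  have e4 : ((M.E \ Z) ∪ X) ∩ ((M.E \ Z) ∪ Y) = (M.E \ Z) ∪ (X ∩ Y) := by
    ext x; simp only [Finset.mem_union, Finset.mem_inter]; tauto
  rw [e1, e2] at h1; rw [e3, e4] at h2
  unfold FinMatroid.mu; omega

/-- The increment: `0` if `c` adds nothing over `X`, else `1`. -/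
def t (M : FinMatroid α) (Z X : Finset α) : ℕ :=
  if M.mu Z X = (M.r X : ℤ) then 0 else 1

lemma t_le_one (M : FinMatroid α) (Z X : Finset α) : t M Z X ≤ 1 := by
  unfold t; split_ifs <;> omega

lemma t_spec (M : FinMatroid α) {Z X : Finset α} (hZ : Z ⊆ M.E) (hX : X ⊆ M.E) :
    (t M Z X = 0 ∧ M.mu Z X = (M.r X : ℤ)) ∨
    (t M Z X = 1 ∧ (M.r X : ℤ) + 1 ≤ M.mu Z X) := by
  have hge := mu_ge M hZ hX
  unfold t; split_ifs with h
  · exact Or.inl ⟨rfl, h⟩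
  · exact Or.inr ⟨rfl, by omega⟩

lemma t_anti (M : FinMatroid α) {Z X Y : Finset α} (hZ : Z ⊆ M.E) (hXY : X ⊆ Y)
    (hY : Y ⊆ M.E) : t M Z Y ≤ t M Z X := by
  have hg := g_anti M hZ hXY hY
  have hgeY := mu_ge M hZ hY
  unfold t; split_ifs with h1 h2 <;> omega

/-- The rank function of the extension. -/
def guts (M : FinMatroid α) (Z : Finset α) (c : α) (X : Finset α) : ℕ :=
  if c ∈ X then M.r (X.erase c) + t M Z (X.erase c) else M.r X

lemma key_le (M : FinMatroid α) {Z X : Finset α} (hZ : Z ⊆ M.E) (hX : X ⊆ M.E)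
    {e : α} (he : e ∈ M.E) :
    M.r X + t M Z X ≤ M.r (insert e X) + t M Z (insert e X) := by
  have hiX : insert e X ⊆ M.E := Finset.insert_subset he hX
  have h1 := M.r_le_insert X hX e he
  have h2 := mu_insert_ge M hZ hX he
  rcases t_spec M hZ hX with ⟨ha, hb⟩ | ⟨ha, hb⟩ <;>
    rcases t_spec M hZ hiX with ⟨hc', hd⟩ | ⟨hc', hd⟩ <;> omega

lemma key_ge (M : FinMatroid α) {Z X : Finset α} (hZ : Z ⊆ M.E) (hX : X ⊆ M.E)
    {e : α} (he : e ∈ M.E) :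
    M.r (insert e X) + t M Z (insert e X) ≤ M.r X + t M Z X + 1 := by
  have h1 := M.r_insert_le X hX e he
  have h2 := t_anti M hZ (Finset.subset_insert e X) (Finset.insert_subset he hX)
  omega

lemma key_submod (M : FinMatroid α) {Z X Y : Finset α} (hZ : Z ⊆ M.E) (hX : X ⊆ M.E)
    (hY : Y ⊆ M.E) :
    M.r (X ∪ Y) + t M Z (X ∪ Y) + (M.r (X ∩ Y) + t M Z (X ∩ Y)) ≤
      M.r X + t M Z X + (M.r Y + t M Z Y) := by
  have hU : X ∪ Y ⊆ M.E := Finset.union_subset hX hY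
  have hI : X ∩ Y ⊆ M.E := Finset.inter_subset_left.trans hX
  have hs := M.r_submod X hX Y hY
  have hm := mu_submod M hZ hX hY
  have ht1 := t_anti M hZ Finset.subset_union_left hU
  have ht2 := t_anti M hZ Finset.subset_union_right hU
  rcases t_spec M hZ hX with ⟨ha, hb⟩ | ⟨ha, hb⟩ <;>
    rcases t_spec M hZ hY with ⟨hc', hd⟩ | ⟨hc', hd⟩ <;>
    rcases t_spec M hZ hU with ⟨he', hf⟩ | ⟨he', hf⟩ <;>
    rcases t_spec M hZ hI with ⟨hg', hh⟩ | ⟨hg', hh⟩ <;> omega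

end FreeGuts

open FreeGuts

open FinMatroid in
/-- Placing `c` freely into the guts of the separation `(Z, E \ Z)`: the function `R`
which agrees with `r_M` on subsets of `E`, and with `R(X ∪ {c}) = r_M(X)` if
`μ_M(Z, X) = r_M(X)` and `R(X ∪ {c}) = r_M(X) + 1` otherwise, is the rank function of a
matroid on `E ∪ {c}`. -/
theorem exists_free_guts_extension {α : Type*} [DecidableEq α] (M : FinMatroid α)
    (Z : Finset α) (hZ : Z ⊆ M.E) (c : α) (hc : c ∉ M.E) :
    ∃ M' : FinMatroid α, M'.E = insert c M.E ∧
      (∀ X ⊆ M.E, M'.r X = M.r X) ∧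
      (∀ X ⊆ M.E, M'.r (insert c X) =
        if M.mu Z X = (M.r X : ℤ) then M.r X else M.r X + 1) := by
  classical
  have hsub : ∀ X : Finset α, X ⊆ insert c M.E → X.erase c ⊆ M.E :=
    fun X hX => Finset.subset_insert_iff.mp hX
  refine ⟨⟨insert c M.E, guts M Z c, ?_, ?_, ?_, ?_⟩, rfl, ?_, ?_⟩
  · -- r_empty
    simp [guts, M.r_empty]
  · -- r_le_insert
    intro X hX e he
    by_cases hec : e = c
    · subst hec
      by_cases hcX : e ∈ X
      · rw [Finset.insert_eq_self.mpr hcX]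
      · simp only [guts, if_neg hcX, if_pos (Finset.mem_insert_self e X),
          Finset.erase_insert hcX]
        exact Nat.le_add_right _ _
    · have heE : e ∈ M.E := by
        rcases Finset.mem_insert.mp he with h | h
        · exact absurd h hec
        · exact h
      have hne : e ≠ c := hec
      by_cases hcX : c ∈ X
      · have hc1 : c ∈ insert e X := Finset.mem_insert_of_mem hcX
        simp only [guts, if_pos hcX, if_pos hc1, Finset.erase_insert_of_ne hne]
        exact key_le M hZ (hsub X hX) heE
      · have hXE : X ⊆ M.E := by
          have h := hsub X hX; rwa [Finset.erase_eq_self.mpr hcX] at h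
        have hc2 : c ∉ insert e X := by
          simp only [Finset.mem_insert, not_or]; exact ⟨fun h => hne h.symm, hcX⟩
        simp only [guts, if_neg hcX, if_neg hc2]
        exact M.r_le_insert X hXE e heE
  · -- r_insert_le
    intro X hX e he
    by_cases hec : e = c
    · subst hec
      by_cases hcX : e ∈ X
      · rw [Finset.insert_eq_self.mpr hcX]; exact Nat.le_succ _
      · simp only [guts, if_neg hcX, if_pos (Finset.mem_insert_self e X),
          Finset.erase_insert hcX]
        have := t_le_one M Z X; omega
    · have heE : e ∈ M.E := by
        rcases Finset.mem_insert.mp he with h | h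
        · exact absurd h hec
        · exact h
      have hne : e ≠ c := hec
      by_cases hcX : c ∈ X
      · have hc1 : c ∈ insert e X := Finset.mem_insert_of_mem hcX
        simp only [guts, if_pos hcX, if_pos hc1, Finset.erase_insert_of_ne hne]
        exact key_ge M hZ (hsub X hX) heE
      · have hXE : X ⊆ M.E := by
          have h := hsub X hX; rwa [Finset.erase_eq_self.mpr hcX] at h
        have hc2 : c ∉ insert e X := by
          simp only [Finset.mem_insert, not_or]; exact ⟨fun h => hne h.symm, hcX⟩
        simp only [guts, if_neg hcX, if_neg hc2]
        exact M.r_insert_le X hXE e heE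
  · -- r_submod
    intro X hX Y hY
    have hX' := hsub X hX
    have hY' := hsub Y hY
    by_cases hcX : c ∈ X <;> by_cases hcY : c ∈ Y
    · have hcU : c ∈ X ∪ Y := Finset.mem_union_left _ hcX
      have hcI : c ∈ X ∩ Y := Finset.mem_inter.mpr ⟨hcX, hcY⟩
      have eU : (X ∪ Y).erase c = X.erase c ∪ Y.erase c := by
        ext x; simp only [Finset.mem_erase, Finset.mem_union]; tauto
      have eI : (X ∩ Y).erase c = X.erase c ∩ Y.erase c := by
        ext x; simp only [Finset.mem_erase, Finset.mem_inter]; tauto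
      simp only [guts, if_pos hcX, if_pos hcY, if_pos hcU, if_pos hcI, eU, eI]
      exact key_submod M hZ hX' hY'
    · have hcU : c ∈ X ∪ Y := Finset.mem_union_left _ hcX
      have hcI : c ∉ X ∩ Y := fun h => hcY (Finset.mem_inter.mp h).2
      have eU : (X ∪ Y).erase c = X.erase c ∪ Y := by
        ext x
        have hxY : x ∈ Y → ¬x = c := fun h hh => hcY (hh ▸ h)
        simp only [Finset.mem_erase, Finset.mem_union]; tauto
      have eI : X ∩ Y = X.erase c ∩ Y := by
        ext x
        have hxY : x ∈ Y → ¬x = c := fun h hh => hcY (hh ▸ h)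
        simp only [Finset.mem_erase, Finset.mem_inter]; tauto
      have hYE : Y ⊆ M.E := by
        have h := hY'; rwa [Finset.erase_eq_self.mpr hcY] at h
      simp only [guts, if_pos hcX, if_neg hcY, if_pos hcU, if_neg hcI]
      rw [eU, eI]
      have hs := M.r_submod (X.erase c) hX' Y hYE
      have ht := t_anti M hZ (Finset.subset_union_left (s₂ := Y))
        (Finset.union_subset hX' hYE)
      omega
    · have hcU : c ∈ X ∪ Y := Finset.mem_union_right _ hcY
      have hcI : c ∉ X ∩ Y := fun h => hcX (Finset.mem_inter.mp h).1
      have eU : (X ∪ Y).erase c = X ∪ Y.erase c := by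
        ext x
        have hxX : x ∈ X → ¬x = c := fun h hh => hcX (hh ▸ h)
        simp only [Finset.mem_erase, Finset.mem_union]; tauto
      have eI : X ∩ Y = X ∩ Y.erase c := by
        ext x
        have hxX : x ∈ X → ¬x = c := fun h hh => hcX (hh ▸ h)
        simp only [Finset.mem_erase, Finset.mem_inter]; tauto
      have hXE : X ⊆ M.E := by
        have h := hX'; rwa [Finset.erase_eq_self.mpr hcX] at h
      simp only [guts, if_neg hcX, if_pos hcY, if_pos hcU, if_neg hcI]
      rw [eU, eI]
      have hs := M.r_submod X hXE (Y.erase c) hY'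
      have ht := t_anti M hZ (Finset.subset_union_right (s₁ := X))
        (Finset.union_subset hXE hY')
      omega
    · have hXE : X ⊆ M.E := by
        have h := hX'; rwa [Finset.erase_eq_self.mpr hcX] at h
      have hYE : Y ⊆ M.E := by
        have h := hY'; rwa [Finset.erase_eq_self.mpr hcY] at h
      have hcU : c ∉ X ∪ Y := by
        simp only [Finset.mem_union, not_or]; exact ⟨hcX, hcY⟩
      have hcI : c ∉ X ∩ Y := fun h => hcX (Finset.mem_inter.mp h).1
      simp only [guts, if_neg hcX, if_neg hcY, if_neg hcU, if_neg hcI]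
      exact M.r_submod X hXE Y hYE
  · -- agrees with r on subsets of E
    intro X hX
    have hcX : c ∉ X := fun h => hc (hX h)
    simp [guts, hcX]
  · -- value on insert c X
    intro X hX
    have hcX : c ∉ X := fun h => hc (hX h)
    simp only [guts, if_pos (Finset.mem_insert_self c X), Finset.erase_insert hcX, t]
    split_ifs <;> omega
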